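/- For all integers n > d ≥ 2 and ⌊d/2⌋ − 1 ≤ k ≤ d−1, the rational identity F(d,n,k) − F(d−2,n,k) = [(n − δ(d)·(n−k−2)) / ⌈d/2⌉] · binom(n−⌊d/2⌋−1, n−d) · binom(⌈d/2⌉, d−k−1) holds. -/

import Mathlib

noncomputable section

/-- `ρ(d,k) = (1/2)(binom(⌈d/2⌉,k) + binom(⌊d/2⌋,k))`. -/
def rho (d k : ℕ) : ℚ :=
  (((d + 1) / 2).choose k + (d / 2).choose k) / 2

/-- Extended binomial coefficient: `binom(a,b) = 0` unless `0 ≤ b ≤ a`. -/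
def ichoose (a b : ℤ) : ℤ :=
  if 0 ≤ b ∧ b ≤ a then (a.toNat).choose b.toNat else 0

/-- `δ(d) = ⌈d/2⌉ - ⌊d/2⌋`. -/
def deltaPar (d : ℕ) : ℕ := (d + 1) / 2 - d / 2

/-- `F(d,n,k)`, the number of `k`-faces of the cyclic polytope `C(d,n)` (for `d ≥ 2`). -/
def Fcyc (d n k : ℕ) : ℚ :=
  (((n : ℚ) - (deltaPar d : ℚ) * ((n : ℚ) - (k : ℚ) - 2)) / ((n : ℚ) - (k : ℚ) - 1)) *
    ∑ j ∈ Finset.range (d / 2 + 1),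
      (ichoose ((n : ℤ) - 1 - (j : ℤ)) ((k : ℤ) + 1 - (j : ℤ)) : ℚ) *
        (ichoose ((n : ℤ) - (k : ℤ) - 1) (2 * (j : ℤ) - (k : ℤ) - 1 + (deltaPar d : ℤ)) : ℚ)

/-- `Ffac(d,n)`, the number of facets of the cyclic polytope `C(d,n)` (for `d ≥ 2`). -/
def Ffac (d n : ℕ) : ℚ :=
  (ichoose ((n : ℤ) - (((d + 1) / 2 : ℕ) : ℤ)) ((n : ℤ) - (d : ℤ)) : ℚ) +
    (ichoose ((n : ℤ) - (((d + 2) / 2 : ℕ) : ℤ)) ((n : ℤ) - (d : ℤ)) : ℚ)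
lemma keyQ (i b e : ℕ) (he : e ≤ b + 1) (h1 : 1 ≤ i + e) :
    ((i + e : ℕ) : ℚ) * (((i + b).choose i : ℚ) * ((b + 1).choose e : ℚ)) =
      ((b : ℚ) + 1) * (((i + b).choose (i + e - 1) : ℚ) * (((i + e).choose e : ℚ))) := by
  obtain ⟨p, hp⟩ : ∃ p, i + e = p + 1 := ⟨i + e - 1, by omega⟩
  have h2 : i + e - 1 = p := by omega
  rw [h2, hp]
  rw [Nat.cast_choose ℚ (show i ≤ i + b by omega),
      Nat.cast_choose ℚ he,
      Nat.cast_choose ℚ (show p ≤ i + b by omega),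
      Nat.cast_choose ℚ (show e ≤ p + 1 by omega),
      show i + b - i = b by omega,
      show i + b - p = b + 1 - e by omega,
      show p + 1 - e = i by omega,
      Nat.factorial_succ (b), Nat.factorial_succ p]
  have f1 : (i.factorial : ℚ) ≠ 0 := by exact_mod_cast i.factorial_ne_zero
  have f2 : (b.factorial : ℚ) ≠ 0 := by exact_mod_cast b.factorial_ne_zero
  have f3 : (e.factorial : ℚ) ≠ 0 := by exact_mod_cast e.factorial_ne_zero
  have f4 : (p.factorial : ℚ) ≠ 0 := by exact_mod_cast p.factorial_ne_zero
  have f5 : ((b + 1 - e).factorial : ℚ) ≠ 0 := by exact_mod_cast (b + 1 - e).factorial_ne_zero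
  push_cast
  field_simp

lemma ichoose_eq_choose (a b : ℤ) (A B : ℕ) (ha : a = (A : ℤ)) (hb : b = (B : ℤ))
    (hBA : B ≤ A) : ichoose a b = A.choose B := by
  subst ha hb
  rw [ichoose, if_pos ⟨Int.natCast_nonneg B, by exact_mod_cast hBA⟩]
  simp

/-- For `n > d ≥ 2` and `⌊d/2⌋ - 1 ≤ k ≤ d-1`,
`F(d,n,k) - F(d-2,n,k)
  = ((n - δ(d)(n-k-2)) / ⌈d/2⌉) ⬝ binom(n-⌊d/2⌋-1, n-d) ⬝ binom(⌈d/2⌉, d-k-1)`. -/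
theorem cyclic_face_difference (d n k : ℕ) (hd : 2 ≤ d) (hn : d < n)
    (hk1 : d / 2 ≤ k + 1) (hk2 : k + 1 ≤ d) :
    Fcyc d n k - Fcyc (d - 2) n k =
      ((n : ℚ) - (deltaPar d : ℚ) * ((n : ℚ) - (k : ℚ) - 2)) / (((d + 1) / 2 : ℕ) : ℚ) *
        (ichoose ((n : ℤ) - ((d / 2 : ℕ) : ℤ) - 1) ((n : ℤ) - (d : ℤ)) : ℚ) *
        (ichoose ((((d + 1) / 2 : ℕ)) : ℤ) ((d : ℤ) - (k : ℤ) - 1) : ℚ) := by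
  have hδd : deltaPar d = (d + 1) / 2 - d / 2 := rfl
  have hδ : deltaPar (d - 2) = deltaPar d := by unfold deltaPar; omega
  have hs : (d - 2) / 2 + 1 = d / 2 := by omega
  simp only [Fcyc, hδ, hs]
  rw [Finset.sum_range_succ, mul_add, add_sub_cancel_left]
  -- convert the four ichooses
  have h1 : ichoose ((n : ℤ) - 1 - ((d / 2 : ℕ) : ℤ)) ((k : ℤ) + 1 - ((d / 2 : ℕ) : ℤ))
      = ((n - d / 2 - 1).choose (k + 1 - d / 2) : ℤ) := by
    rw [ichoose_eq_choose _ _ (n - d / 2 - 1) (k + 1 - d / 2) (by omega) (by omega) (by omega)]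
  have h2 : ichoose ((n : ℤ) - (k : ℤ) - 1)
        (2 * ((d / 2 : ℕ) : ℤ) - (k : ℤ) - 1 + (deltaPar d : ℤ))
      = ((n - k - 1).choose (d - k - 1) : ℤ) := by
    rw [ichoose_eq_choose _ _ (n - k - 1) (d - k - 1) (by omega) (by omega) (by omega)]
  have h3 : ichoose ((n : ℤ) - ((d / 2 : ℕ) : ℤ) - 1) ((n : ℤ) - (d : ℤ))
      = ((n - d / 2 - 1).choose (n - d) : ℤ) := by
    rw [ichoose_eq_choose _ _ (n - d / 2 - 1) (n - d) (by omega) (by omega) (by omega)]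
  have h4 : ichoose ((((d + 1) / 2 : ℕ)) : ℤ) ((d : ℤ) - (k : ℤ) - 1)
      = (((d + 1) / 2).choose (d - k - 1) : ℤ) := by
    rw [ichoose_eq_choose _ _ ((d + 1) / 2) (d - k - 1) (by omega) (by omega) (by omega)]
  rw [h1, h2, h3, h4]
  have hC3 : (n - d / 2 - 1).choose (n - d) = (n - d / 2 - 1).choose ((d + 1) / 2 - 1) := by
    rw [show n - d = (n - d / 2 - 1) - ((d + 1) / 2 - 1) by omega,
        Nat.choose_symm (by omega)]
  rw [hC3]
  have hk' := keyQ (k + 1 - d / 2) (n - k - 2) (d - k - 1) (by omega) (by omega)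
  rw [show k + 1 - d / 2 + (n - k - 2) = n - d / 2 - 1 by omega,
      show k + 1 - d / 2 + (d - k - 1) = (d + 1) / 2 by omega,
      show n - k - 2 + 1 = n - k - 1 by omega] at hk'
  have e4 : ((n - k - 2 : ℕ) : ℚ) = (n : ℚ) - k - 2 := by
    have h : ((n - k - 2 : ℕ) : ℤ) = (n : ℤ) - k - 2 := by omega
    exact_mod_cast h
  rw [e4] at hk'
  have hX : (n : ℚ) - k - 1 ≠ 0 := by
    have h : ((n - k - 1 : ℕ) : ℚ) = (n : ℚ) - k - 1 := by
      have h' : ((n - k - 1 : ℕ) : ℤ) = (n : ℤ) - k - 1 := by omega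
      exact_mod_cast h'
    rw [← h]
    exact_mod_cast (by omega : n - k - 1 ≠ 0)
  have hc0 : (((d + 1) / 2 : ℕ) : ℚ) ≠ 0 := by
    exact_mod_cast (by omega : (d + 1) / 2 ≠ 0)
  push_cast
  field_simp
  linear_combination ((n : ℚ) - ↑(deltaPar d) * ((n : ℚ) - k - 2)) * hk'
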